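/- Let P be a row-stochastic matrix (CPT) from a finite set X to a finite set Y with rows p_x, and let π_1, π_2 be probability mass functions on X with induced marginals ρ_j(y) = Σ_x π_j(x) p_x(y) for j = 1,2. Then d_V(ρ_1, ρ_2) ≤ d⁺(P) · d_V(π_1, π_2), where d⁺(P) = max_{x,x'} d_V(p_x, p_{x'}) is the diameter of P. -/

import Mathlib

noncomputable def dV {Z : Type*} [Fintype Z] (p q : Z → ℝ) : ℝ :=
  (1/2) * ∑ z, |p z - q z|

def IsPMF {Z : Type*} [Fintype Z] (p : Z → ℝ) : Prop :=
  (∀ z, 0 ≤ p z) ∧ ∑ z, p z = 1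

noncomputable def diam {X Y : Type*} [Fintype X] [Fintype Y]
    (P : X → Y → ℝ) : ℝ :=
  ⨆ x : X, ⨆ x' : X, dV (P x) (P x')

lemma dV_nonneg {Z : Type*} [Fintype Z] (p q : Z → ℝ) : 0 ≤ dV p q := by
  have : (0:ℝ) ≤ ∑ z, |p z - q z| := Finset.sum_nonneg fun z _ => abs_nonneg _
  unfold dV; positivity

theorem stmt3 {X Y : Type*} [Fintype X] [Fintype Y] [Nonempty X]
    (P : X → Y → ℝ) (hP : ∀ x, IsPMF (P x))
    (π1 π2 : X → ℝ) (hπ1 : IsPMF π1) (hπ2 : IsPMF π2) :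
    dV (fun y => ∑ x, π1 x * P x y) (fun y => ∑ x, π2 x * P x y) ≤
      diam P * dV π1 π2 := by
  classical
  set t := dV π1 π2 with ht
  have hdiam_le : ∀ x x' : X, dV (P x) (P x') ≤ diam P := by
    intro x x'
    have h1 : dV (P x) (P x') ≤ ⨆ x'' : X, dV (P x) (P x'') :=
      le_ciSup (f := fun x'' : X => dV (P x) (P x'')) (Set.finite_range _).bddAbove x'
    exact h1.trans (le_ciSup (f := fun x : X => ⨆ x'' : X, dV (P x) (P x''))
      (Set.finite_range _).bddAbove x)
  have hdiam_nonneg : 0 ≤ diam P := by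
    obtain ⟨x⟩ := (inferInstance : Nonempty X)
    exact le_trans (dV_nonneg (P x) (P x)) (hdiam_le x x)
  set dp : X → ℝ := fun x => max (π1 x - π2 x) 0 with hdp
  set dm : X → ℝ := fun x => max (π2 x - π1 x) 0 with hdm
  have hsub : ∀ x, dp x - dm x = π1 x - π2 x := by
    intro x
    show max (π1 x - π2 x) 0 - max (π2 x - π1 x) 0 = π1 x - π2 x
    rcases le_total (π1 x) (π2 x) with h | h
    · rw [max_eq_right (by linarith : π1 x - π2 x ≤ 0),
        max_eq_left (by linarith : (0:ℝ) ≤ π2 x - π1 x)]; ring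
    · rw [max_eq_left (by linarith : (0:ℝ) ≤ π1 x - π2 x),
        max_eq_right (by linarith : π2 x - π1 x ≤ 0)]; ring
  have habs : ∀ x, dp x + dm x = |π1 x - π2 x| := by
    intro x
    show max (π1 x - π2 x) 0 + max (π2 x - π1 x) 0 = _
    rcases le_total (π1 x) (π2 x) with h | h
    · rw [abs_of_nonpos (by linarith : π1 x - π2 x ≤ 0),
        max_eq_right (by linarith : π1 x - π2 x ≤ 0),
        max_eq_left (by linarith : (0:ℝ) ≤ π2 x - π1 x)]; ring
    · rw [abs_of_nonneg (by linarith : (0:ℝ) ≤ π1 x - π2 x),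
        max_eq_left (by linarith : (0:ℝ) ≤ π1 x - π2 x),
        max_eq_right (by linarith : π2 x - π1 x ≤ 0)]; ring
  have hdp0 : ∀ x, 0 ≤ dp x := fun x => le_max_right _ _
  have hdm0 : ∀ x, 0 ≤ dm x := fun x => le_max_right _ _
  have hsum0 : ∑ x, (π1 x - π2 x) = 0 := by
    rw [Finset.sum_sub_distrib, hπ1.2, hπ2.2]; ring
  have hsumsub : ∑ x, dp x - ∑ x, dm x = 0 := by
    rw [← Finset.sum_sub_distrib, Finset.sum_congr rfl fun x _ => hsub x]; exact hsum0
  have hsumadd : ∑ x, dp x + ∑ x, dm x = 2 * t := by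
    rw [← Finset.sum_add_distrib, Finset.sum_congr rfl fun x _ => habs x, ht]
    unfold dV; ring
  have hsdp : ∑ x, dp x = t := by linarith
  have hsdm : ∑ x, dm x = t := by linarith
  have step1 : dV (fun y => ∑ x, π1 x * P x y) (fun y => ∑ x, π2 x * P x y)
      = (1/2) * ∑ y, |∑ x, (π1 x - π2 x) * P x y| := by
    unfold dV
    congr 1
    refine Finset.sum_congr rfl fun y _ => ?_
    congr 1
    rw [← Finset.sum_sub_distrib]
    exact Finset.sum_congr rfl fun x _ => by ring
  rcases eq_or_lt_of_le (dV_nonneg π1 π2) with h0 | ht0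
  · -- t = 0 : π1 = π2
    have hzero : ∀ x, π1 x = π2 x := by
      intro x
      have hs : ∑ x, |π1 x - π2 x| = 0 := by
        have h := h0.symm
        unfold dV at h; linarith
      have h1 := (Finset.sum_eq_zero_iff_of_nonneg
        (fun x _ => abs_nonneg (π1 x - π2 x))).1 hs x (Finset.mem_univ x)
      have := abs_eq_zero.1 h1; linarith
    rw [step1]
    have : ∑ y, |∑ x, (π1 x - π2 x) * P x y| = 0 := by
      refine Finset.sum_eq_zero fun y _ => ?_
      rw [abs_eq_zero]
      exact Finset.sum_eq_zero fun x _ => by rw [hzero x]; ring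
    rw [this]
    have := mul_nonneg hdiam_nonneg (dV_nonneg π1 π2)
    rw [ht]; linarith
  · -- t > 0
    rw [← ht] at ht0
    have key : ∀ y, ∑ x, (π1 x - π2 x) * P x y
        = (1/t) * ∑ x, ∑ x', dp x * dm x' * (P x y - P x' y) := by
      intro y
      have expand : ∑ x, ∑ x', dp x * dm x' * (P x y - P x' y)
          = (∑ x, dp x * P x y) * (∑ x', dm x')
            - (∑ x, dp x) * (∑ x', dm x' * P x' y) := by
        rw [Finset.sum_mul_sum, Finset.sum_mul_sum, ← Finset.sum_sub_distrib]
        refine Finset.sum_congr rfl fun x _ => ?_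
        rw [← Finset.sum_sub_distrib]
        exact Finset.sum_congr rfl fun x' _ => by ring
      have hsplit : ∑ x, (π1 x - π2 x) * P x y
          = ∑ x, dp x * P x y - ∑ x, dm x * P x y := by
        rw [← Finset.sum_sub_distrib]
        exact Finset.sum_congr rfl fun x _ => by rw [← hsub x]; ring
      rw [expand, hsdp, hsdm, hsplit]
      field_simp
    rw [step1]
    calc (1/2) * ∑ y, |∑ x, (π1 x - π2 x) * P x y|
        = (1/2) * ((1/t) * ∑ y, |∑ x, ∑ x', dp x * dm x' * (P x y - P x' y)|) := by
          have hstep : ∑ y, |∑ x, (π1 x - π2 x) * P x y|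
              = (1/t) * ∑ y, |∑ x, ∑ x', dp x * dm x' * (P x y - P x' y)| := by
            rw [Finset.mul_sum]
            refine Finset.sum_congr rfl fun y _ => ?_
            rw [key y, abs_mul, abs_of_pos (by positivity : (0:ℝ) < 1/t)]
          rw [hstep]
      _ ≤ (1/2) * ((1/t) * ∑ y, ∑ x, ∑ x', dp x * dm x' * |P x y - P x' y|) := by
          have hb : ∀ y, |∑ x, ∑ x', dp x * dm x' * (P x y - P x' y)|
              ≤ ∑ x, ∑ x', dp x * dm x' * |P x y - P x' y| := by
            intro y
            refine (Finset.abs_sum_le_sum_abs _ _).trans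
              (Finset.sum_le_sum fun x _ => ?_)
            refine (Finset.abs_sum_le_sum_abs _ _).trans
              (Finset.sum_le_sum fun x' _ => ?_)
            rw [abs_mul, abs_mul, abs_of_nonneg (hdp0 x), abs_of_nonneg (hdm0 x')]
          have := Finset.sum_le_sum fun y (_ : y ∈ Finset.univ) => hb y
          have h1t : (0:ℝ) ≤ 1/t := by positivity
          nlinarith
      _ = (1/t) * ∑ x, ∑ x', dp x * dm x' * dV (P x) (P x') := by
          have hsw : ∑ y, ∑ x, ∑ x', dp x * dm x' * |P x y - P x' y|
              = ∑ x, ∑ x', dp x * dm x' * (2 * dV (P x) (P x')) := by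
            rw [Finset.sum_comm]
            refine Finset.sum_congr rfl fun x _ => ?_
            rw [Finset.sum_comm]
            refine Finset.sum_congr rfl fun x' _ => ?_
            have h2dv : 2 * dV (P x) (P x') = ∑ y, |P x y - P x' y| := by
              unfold dV; ring
            rw [h2dv, Finset.mul_sum]
          rw [hsw]
          have h2 : ∑ x, ∑ x', dp x * dm x' * (2 * dV (P x) (P x'))
              = 2 * ∑ x, ∑ x', dp x * dm x' * dV (P x) (P x') := by
            rw [Finset.mul_sum]
            refine Finset.sum_congr rfl fun x _ => ?_
            rw [Finset.mul_sum]
            exact Finset.sum_congr rfl fun x' _ => by ring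
          rw [h2]; ring
      _ ≤ (1/t) * ∑ x, ∑ x', dp x * dm x' * diam P := by
          refine mul_le_mul_of_nonneg_left (Finset.sum_le_sum fun x _ =>
            Finset.sum_le_sum fun x' _ => ?_) (by positivity)
          exact mul_le_mul_of_nonneg_left (hdiam_le x x')
            (mul_nonneg (hdp0 x) (hdm0 x'))
      _ = diam P * t := by
          have : ∑ x, ∑ x', dp x * dm x' * diam P
              = ((∑ x, dp x) * (∑ x', dm x')) * diam P := by
            rw [Finset.sum_mul_sum, Finset.sum_mul]
            refine Finset.sum_congr rfl fun x _ => ?_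
            rw [Finset.sum_mul]
          rw [this, hsdp, hsdm]
          field_simp
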